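/- For every z in the open unit disk, ∫_𝔻 |∂_z G(z, ξ)|^{3/2} dσ(ξ) < 6π/5, where ∂_z G(z,ξ) denotes the partial derivative in z of the Green function G of the unit disk, satisfying |∂_z G(z,ξ)| = (1/(4π))·(1 - |ξ|²)/(|1 - z·conj(ξ)|·|z - ξ|). -/

import Mathlib

open MeasureTheory Complex Set
open scoped ENNReal NNReal

/-- Layer-cake bound for the Riesz-type kernel on the ball of radius 2 in `ℂ`. -/
lemma riesz_lintegral_le :
    ∫⁻ ξ in Metric.ball (0 : ℂ) 2, ENNReal.ofReal (‖ξ‖ ^ (-(3 / 2) : ℝ))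
      ≤ ENNReal.ofReal (7 * Real.pi) := by
  set μ := volume.restrict (Metric.ball (0 : ℂ) 2) with hμ
  have h_nn : 0 ≤ᵐ[μ] fun ξ : ℂ => ‖ξ‖ ^ (-(3 / 2) : ℝ) :=
    ae_of_all _ fun ξ => Real.rpow_nonneg (norm_nonneg _) _
  have h_meas : Measurable fun ξ : ℂ => ‖ξ‖ ^ (-(3 / 2) : ℝ) := by fun_prop
  rw [lintegral_eq_lintegral_meas_le μ h_nn h_meas.aemeasurable]
  have hsub : ∀ t : ℝ, 0 < t →
      {a : ℂ | t ≤ ‖a‖ ^ (-(3 / 2) : ℝ)} ⊆ Metric.closedBall 0 (t ^ (-(2 / 3) : ℝ)) := by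
    intro t ht a ha
    simp only [mem_setOf_eq] at ha
    have ha0 : a ≠ 0 := by
      rintro rfl
      rw [norm_zero, Real.zero_rpow (by norm_num)] at ha
      linarith
    have hna : 0 < ‖a‖ := norm_pos_iff.2 ha0
    have h1 : (‖a‖ ^ (-(3 / 2) : ℝ)) ^ (-(2 / 3) : ℝ) ≤ t ^ (-(2 / 3) : ℝ) :=
      Real.rpow_le_rpow_of_nonpos ht ha (by norm_num)
    rw [← Real.rpow_mul hna.le] at h1
    norm_num at h1
    simpa [Metric.mem_closedBall, dist_zero_right] using h1
  have hball : μ Set.univ ≤ ENNReal.ofReal (4 * Real.pi) := by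
    rw [hμ, Measure.restrict_apply_univ, Complex.volume_ball]
    rw [show ((NNReal.pi : ℝ≥0∞)) = ENNReal.ofReal Real.pi by
      rw [← NNReal.coe_real_pi, ENNReal.ofReal_coe_nnreal]]
    rw [← ENNReal.ofReal_pow (by norm_num), ← ENNReal.ofReal_mul (by positivity)]
    gcongr
    nlinarith [Real.pi_pos]
  calc
    ∫⁻ t in Ioi (0 : ℝ), μ {a : ℂ | t ≤ ‖a‖ ^ (-(3 / 2) : ℝ)}
        ≤ ∫⁻ t in Ioc (0 : ℝ) 1 ∪ Ioi 1, μ {a : ℂ | t ≤ ‖a‖ ^ (-(3 / 2) : ℝ)} :=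
      lintegral_mono_set Ioi_subset_Ioc_union_Ioi
    _ ≤ (∫⁻ t in Ioc (0 : ℝ) 1, μ {a : ℂ | t ≤ ‖a‖ ^ (-(3 / 2) : ℝ)})
        + ∫⁻ t in Ioi (1 : ℝ), μ {a : ℂ | t ≤ ‖a‖ ^ (-(3 / 2) : ℝ)} := lintegral_union_le _ _ _
    _ ≤ ENNReal.ofReal (4 * Real.pi) + ENNReal.ofReal (3 * Real.pi) := by
      gcongr
      · calc
          ∫⁻ t in Ioc (0 : ℝ) 1, μ {a : ℂ | t ≤ ‖a‖ ^ (-(3 / 2) : ℝ)}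
              ≤ ∫⁻ _ in Ioc (0 : ℝ) 1, ENNReal.ofReal (4 * Real.pi) := by
            refine setLIntegral_mono' measurableSet_Ioc fun t ht => ?_
            exact le_trans (measure_mono (subset_univ _)) hball
          _ = ENNReal.ofReal (4 * Real.pi) * volume (Ioc (0 : ℝ) 1) := setLIntegral_const _ _
          _ ≤ ENNReal.ofReal (4 * Real.pi) := by
            simp [Real.volume_Ioc]
      · calc
          ∫⁻ t in Ioi (1 : ℝ), μ {a : ℂ | t ≤ ‖a‖ ^ (-(3 / 2) : ℝ)}
              ≤ ∫⁻ t in Ioi (1 : ℝ), ENNReal.ofReal (Real.pi * t ^ (-(4 / 3) : ℝ)) := by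
            refine setLIntegral_mono' measurableSet_Ioi fun t ht => ?_
            have ht0 : (0 : ℝ) < t := lt_trans one_pos ht
            calc
              μ {a : ℂ | t ≤ ‖a‖ ^ (-(3 / 2) : ℝ)}
                  ≤ volume (Metric.closedBall (0 : ℂ) (t ^ (-(2 / 3) : ℝ))) :=
                le_trans (Measure.restrict_apply_le _ _) (measure_mono (hsub t ht0))
              _ = ENNReal.ofReal (Real.pi * t ^ (-(4 / 3) : ℝ)) := by
                rw [Complex.volume_closedBall]
                rw [show ((NNReal.pi : ℝ≥0∞)) = ENNReal.ofReal Real.pi by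
                  rw [← NNReal.coe_real_pi, ENNReal.ofReal_coe_nnreal]]
                rw [← ENNReal.ofReal_pow (Real.rpow_nonneg ht0.le _),
                  ← ENNReal.ofReal_mul (by positivity)]
                congr 1
                rw [← Real.rpow_natCast (t ^ (-(2 / 3) : ℝ)) 2, ← Real.rpow_mul ht0.le]
                norm_num
                ring
          _ = ENNReal.ofReal Real.pi * ∫⁻ t in Ioi (1 : ℝ), ENNReal.ofReal (t ^ (-(4 / 3) : ℝ)) := by
            rw [← lintegral_const_mul' _ _ ENNReal.ofReal_ne_top]
            congr 1 with t
            rw [← ENNReal.ofReal_mul Real.pi_pos.le]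
          _ = ENNReal.ofReal Real.pi * ENNReal.ofReal 3 := by
            congr 1
            rw [← ofReal_integral_eq_lintegral_ofReal
              (integrableOn_Ioi_rpow_of_lt (by norm_num) one_pos)
              (ae_restrict_of_forall_mem measurableSet_Ioi fun t ht =>
                Real.rpow_nonneg (le_of_lt (lt_trans one_pos ht)) _)]
            rw [integral_Ioi_rpow_of_lt (by norm_num) one_pos]
            norm_num
          _ = ENNReal.ofReal (3 * Real.pi) := by
            rw [← ENNReal.ofReal_mul Real.pi_pos.le, mul_comm]
    _ = ENNReal.ofReal (7 * Real.pi) := by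
      rw [← ENNReal.ofReal_add (by positivity) (by positivity)]
      ring_nf

lemma pointwise_bound (z : ℂ) (hz : ‖z‖ < 1) {ξ : ℂ} (hξ : ‖ξ‖ < 1) :
    ((1 / (4 * Real.pi)) * (1 - ‖ξ‖ ^ 2)
        / (‖1 - z * (starRingEnd ℂ) ξ‖ * ‖z - ξ‖)) ^ ((3 : ℝ) / 2)
      ≤ (1 / (2 * Real.pi)) ^ ((3 : ℝ) / 2) * ‖z - ξ‖ ^ (-(3 / 2) : ℝ) := by
  set A := ‖1 - z * (starRingEnd ℂ) ξ‖ with hA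
  set B := ‖z - ξ‖ with hB
  have hπ := Real.pi_pos
  have hAlb : 1 - ‖ξ‖ ≤ A := by
    have h1 : ‖(1 : ℂ)‖ - ‖z * (starRingEnd ℂ) ξ‖ ≤ A := norm_sub_norm_le _ _
    have h2 : ‖z * (starRingEnd ℂ) ξ‖ = ‖z‖ * ‖ξ‖ := by
      rw [norm_mul, RCLike.norm_conj]
    have h3 : ‖z‖ * ‖ξ‖ ≤ ‖ξ‖ := by
      nlinarith [norm_nonneg ξ, norm_nonneg z]
    simp only [norm_one] at h1
    linarith
  have hA0 : 0 < A := lt_of_lt_of_le (by linarith) hAlb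
  have hnum : 1 - ‖ξ‖ ^ 2 ≤ 2 * A := by nlinarith [norm_nonneg ξ]
  have hnum0 : 0 ≤ 1 - ‖ξ‖ ^ 2 := by nlinarith [norm_nonneg ξ]
  have key : (1 / (4 * Real.pi)) * (1 - ‖ξ‖ ^ 2) / (A * B)
      ≤ (1 / (2 * Real.pi)) * B⁻¹ := by
    rcases eq_or_lt_of_le (norm_nonneg (z - ξ)) with h0 | hB0
    · have hB0 : B = 0 := h0.symm
      rw [hB0]
      simp
    · have hBne : B ≠ 0 := hB0.ne'
      rw [div_le_iff₀ (by positivity)]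
      have h2 : 1 / (2 * Real.pi) * B⁻¹ * (A * B) = A / (2 * Real.pi) := by
        field_simp
      rw [h2, one_div_mul_eq_div, div_le_div_iff₀ (by positivity) (by positivity)]
      nlinarith
  have hq0 : 0 ≤ (1 / (4 * Real.pi)) * (1 - ‖ξ‖ ^ 2) / (A * B) := by positivity
  calc
    ((1 / (4 * Real.pi)) * (1 - ‖ξ‖ ^ 2) / (A * B)) ^ ((3 : ℝ) / 2)
        ≤ ((1 / (2 * Real.pi)) * B⁻¹) ^ ((3 : ℝ) / 2) :=
      Real.rpow_le_rpow hq0 key (by norm_num)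
    _ = (1 / (2 * Real.pi)) ^ ((3 : ℝ) / 2) * B ^ (-(3 / 2) : ℝ) := by
      rw [Real.mul_rpow (by positivity) (inv_nonneg.2 (norm_nonneg _)),
        Real.inv_rpow (norm_nonneg _), ← Real.rpow_neg (norm_nonneg _)]

theorem stmt12 (z : ℂ) (hz : z ∈ Metric.ball (0 : ℂ) 1) :
    (∫ ξ in Metric.ball (0 : ℂ) 1,
        ((1 / (4 * Real.pi)) * (1 - ‖ξ‖ ^ 2)
            / (‖1 - z * (starRingEnd ℂ) ξ‖ * ‖z - ξ‖)) ^ ((3 : ℝ) / 2))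
      < 6 * Real.pi / 5 := by
  have hπ := Real.pi_pos
  rw [Metric.mem_ball, dist_zero_right] at hz
  set F := fun ξ : ℂ => ((1 / (4 * Real.pi)) * (1 - ‖ξ‖ ^ 2)
      / (‖1 - z * (starRingEnd ℂ) ξ‖ * ‖z - ξ‖)) ^ ((3 : ℝ) / 2) with hF
  set C : ℝ := (1 / (2 * Real.pi)) ^ ((3 : ℝ) / 2) with hC
  have hC0 : 0 ≤ C := Real.rpow_nonneg (by positivity) _
  have hF_nn : 0 ≤ᵐ[volume.restrict (Metric.ball (0 : ℂ) 1)] F := by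
    refine ae_restrict_of_forall_mem Metric.isOpen_ball.measurableSet fun ξ hξ => ?_
    rw [Metric.mem_ball, dist_zero_right] at hξ
    have : 0 ≤ 1 - ‖ξ‖ ^ 2 := by nlinarith [norm_nonneg ξ]
    exact Real.rpow_nonneg (by positivity) _
  have hF_meas : Measurable F := by
    have hst : Measurable fun ξ : ℂ => (starRingEnd ℂ) ξ := Complex.continuous_conj.measurable
    fun_prop
  rw [integral_eq_lintegral_of_nonneg_ae hF_nn hF_meas.aestronglyMeasurable]
  have hL : ∫⁻ ξ in Metric.ball (0 : ℂ) 1, ENNReal.ofReal (F ξ)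
      ≤ ENNReal.ofReal (C * (7 * Real.pi)) := by
    calc
      ∫⁻ ξ in Metric.ball (0 : ℂ) 1, ENNReal.ofReal (F ξ)
          ≤ ∫⁻ ξ in Metric.ball (0 : ℂ) 1,
              ENNReal.ofReal C * ENNReal.ofReal (‖z - ξ‖ ^ (-(3 / 2) : ℝ)) := by
        refine setLIntegral_mono' Metric.isOpen_ball.measurableSet fun ξ hξ => ?_
        rw [Metric.mem_ball, dist_zero_right] at hξ
        rw [← ENNReal.ofReal_mul hC0]
        exact ENNReal.ofReal_le_ofReal (pointwise_bound z hz hξ)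
      _ = ENNReal.ofReal C
          * ∫⁻ ξ in Metric.ball (0 : ℂ) 1, ENNReal.ofReal (‖z - ξ‖ ^ (-(3 / 2) : ℝ)) :=
        lintegral_const_mul' _ _ ENNReal.ofReal_ne_top
      _ ≤ ENNReal.ofReal C
          * ∫⁻ ξ in Metric.ball z 2, ENNReal.ofReal (‖z - ξ‖ ^ (-(3 / 2) : ℝ)) := by
        gcongr
        intro ξ hξ
        rw [Metric.mem_ball, dist_zero_right] at hξ
        rw [Metric.mem_ball]
        calc dist ξ z ≤ ‖ξ‖ + ‖z‖ := by
              rw [dist_eq_norm]; exact norm_sub_le _ _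
          _ < 2 := by linarith
      _ ≤ ENNReal.ofReal C * ENNReal.ofReal (7 * Real.pi) := by
        gcongr
        have hmp : MeasurePreserving (fun x : ℂ => x + z) volume volume :=
          measurePreserving_add_right volume z
        have := hmp.setLIntegral_comp_preimage_emb
          (measurableEmbedding_addRight z)
          (fun ξ => ENNReal.ofReal (‖z - ξ‖ ^ (-(3 / 2) : ℝ))) (Metric.ball z 2)
        rw [← this]
        have hpre : (fun x : ℂ => x + z) ⁻¹' Metric.ball z 2 = Metric.ball 0 2 := by
          ext x
          simp [Metric.mem_ball, dist_eq_norm]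
        rw [hpre]
        have : ∀ x : ℂ, ‖z - (x + z)‖ = ‖x‖ := fun x => by
          rw [show z - (x + z) = -x by ring, norm_neg]
        simp_rw [this]
        exact riesz_lintegral_le
    rw [← ENNReal.ofReal_mul hC0]
  have hfin : ENNReal.ofReal (C * (7 * Real.pi)) ≠ ⊤ := ENNReal.ofReal_ne_top
  have h1 : (∫⁻ ξ in Metric.ball (0 : ℂ) 1, ENNReal.ofReal (F ξ)).toReal
      ≤ C * (7 * Real.pi) := by
    refine le_trans (ENNReal.toReal_mono hfin hL) ?_
    rw [ENNReal.toReal_ofReal (by positivity)]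
  refine lt_of_le_of_lt h1 ?_
  have hCle : C ≤ 1 / 14 := by
    have h6 : (1 : ℝ) / (2 * Real.pi) ≤ 1 / 6 := by
      rw [div_le_div_iff₀ (by positivity) (by norm_num)]
      nlinarith [Real.pi_gt_three]
    have h1 : C ≤ ((1 : ℝ) / 6) ^ ((3 : ℝ) / 2) :=
      Real.rpow_le_rpow (by positivity) h6 (by norm_num)
    refine le_trans h1 ?_
    have h2 : ((1 : ℝ) / 6) ^ ((3 : ℝ) / 2) = Real.sqrt (((1 : ℝ) / 6) ^ (3 : ℕ)) := by
      rw [show ((3 : ℝ) / 2) = ((3 : ℕ) : ℝ) * (1 / 2 : ℝ) by norm_num,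
        Real.rpow_mul (by norm_num), Real.rpow_natCast, Real.sqrt_eq_rpow]
    rw [h2, show ((1 : ℝ) / 6) ^ (3 : ℕ) = 1 / 216 by norm_num,
      show (1 : ℝ) / 14 = Real.sqrt (((1 : ℝ) / 14) ^ 2) by rw [Real.sqrt_sq (by norm_num)]]
    apply Real.sqrt_le_sqrt
    norm_num
  nlinarith [Real.pi_pos]
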